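/- For n ≥ 1, the derivative of the degenerate r-Bell polynomial satisfies d/dx φ_{n,λ}^{(r)}(x) = ∑_{k=0}^{n-1} C(n,k) (1)_{n-k,λ} φ_{k,λ}^{(r)}(x). -/

import Mathlib

/-- Generalized falling factorial `(y)_{m,λ} = y(y-λ)⋯(y-(m-1)λ)`. -/
noncomputable def degFallFact (y l : ℝ) (m : ℕ) : ℝ :=
  ∏ i ∈ Finset.range m, (y - i * l)

/-- ordinary falling factorial -/
noncomputable def ff (x : ℝ) (k : ℕ) : ℝ := ∏ i ∈ Finset.range k, (x - i)

lemma ff_succ (x : ℝ) (k : ℕ) : ff x (k+1) = ff x k * (x - k) :=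
  Finset.prod_range_succ _ _

lemma ff_succ' (x : ℝ) (k : ℕ) : ff (x+1) (k+1) = (x+1) * ff x k := by
  unfold ff
  rw [Finset.prod_range_succ', mul_comm]
  congr 1
  · simp
  · exact Finset.prod_congr rfl (fun i _ => by push_cast; ring)

lemma ff_shift (x : ℝ) (k : ℕ) : ff (x+1) k = ff x k + k * ff x (k-1) := by
  cases k with
  | zero => simp [ff]
  | succ j => rw [ff_succ', ff_succ]; push_cast [Nat.succ_sub_one]; ring

lemma ff_nat_eq_zero (m k : ℕ) (h : m < k) : ff (m:ℝ) k = 0 :=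
  Finset.prod_eq_zero (Finset.mem_range.mpr h) (by simp)

lemma ff_nat_self (m : ℕ) : ff (m:ℝ) m = m.factorial := by
  induction m with
  | zero => simp [ff]
  | succ j ih =>
    rw [show ((j+1:ℕ):ℝ) = (j:ℝ)+1 by push_cast; ring, ff_succ', ih]
    push_cast [Nat.factorial_succ]; ring

lemma coeff_unique (N : ℕ) (c : ℕ → ℝ)
    (h : ∀ x : ℝ, ∑ j ∈ Finset.range N, c j * ff x j = 0) :
    ∀ j < N, c j = 0 := by
  intro j hj
  induction j using Nat.strong_induction_on with
  | _ j ih =>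
    have h0 := h (j : ℝ)
    have hsub : Finset.range (j+1) ⊆ Finset.range N := Finset.range_subset_range.mpr hj
    have hzero : ∀ k ∈ Finset.range N, k ∉ Finset.range (j+1) →
        c k * ff (j:ℝ) k = 0 := by
      intro k _ hk
      rw [ff_nat_eq_zero j k (by simpa using hk), mul_zero]
    rw [← Finset.sum_subset hsub hzero, Finset.sum_range_succ] at h0
    have hsmall : ∑ k ∈ Finset.range j, c k * ff (j:ℝ) k = 0 := by
      apply Finset.sum_eq_zero
      intro k hk
      rw [ih k (Finset.mem_range.mp hk) (lt_trans (Finset.mem_range.mp hk) hj), zero_mul]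
    rw [hsmall, zero_add, ff_nat_self] at h0
    have : (j.factorial : ℝ) ≠ 0 := Nat.cast_ne_zero.mpr j.factorial_ne_zero
    exact (mul_eq_zero.mp h0).resolve_right this

lemma sum_swap_tri (n : ℕ) (f : ℕ → ℕ → ℝ) :
    ∑ m ∈ Finset.range n, ∑ k ∈ Finset.range (m+1), f m k
      = ∑ k ∈ Finset.range n, ∑ m ∈ Finset.Ico k n, f m k := by
  rw [Finset.range_eq_Ico, Finset.sum_Ico_Ico_comm]; simp only [Finset.range_eq_Ico]

lemma dff_succ (z l : ℝ) (m : ℕ) :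
    degFallFact z l (m+1) = degFallFact z l m * (z - m*l) :=
  Finset.prod_range_succ _ _

lemma vdm (l x y : ℝ) (n : ℕ) :
    degFallFact (x+y) l n = ∑ m ∈ Finset.range (n+1),
      (n.choose m : ℝ) * degFallFact x l m * degFallFact y l (n-m) := by
  induction n with
  | zero => simp [degFallFact]
  | succ n ih =>
    rw [dff_succ, ih, Finset.sum_mul]
    have hterm : ∀ m ∈ Finset.range (n+1),
        (n.choose m : ℝ) * degFallFact x l m * degFallFact y l (n-m) * (x + y - n*l)
        = (n.choose m : ℝ) * degFallFact x l (m+1) * degFallFact y l (n-m)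
          + (n.choose m : ℝ) * degFallFact x l m * degFallFact y l ((n-m)+1) := by
      intro m hm
      have hmn : m ≤ n := Nat.lt_succ_iff.mp (Finset.mem_range.mp hm)
      rw [dff_succ, dff_succ]
      have hcast : ((n-m : ℕ) : ℝ) = (n:ℝ) - m := by
        push_cast [hmn]; ring
      rw [hcast]; ring
    rw [Finset.sum_congr rfl hterm, Finset.sum_add_distrib]
    -- RHS side manipulation
    rw [Finset.sum_range_succ' (fun m => ((n+1).choose m : ℝ) * degFallFact x l m
        * degFallFact y l (n+1-m))]
    have h1 : ∀ m ∈ Finset.range (n+1),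
        (((n+1).choose (m+1) : ℝ)) * degFallFact x l (m+1) * degFallFact y l (n+1-(m+1))
        = (n.choose m : ℝ) * degFallFact x l (m+1) * degFallFact y l (n-m)
          + (n.choose (m+1) : ℝ) * degFallFact x l (m+1) * degFallFact y l (n-m) := by
      intro m _
      have : n+1-(m+1) = n-m := by omega
      rw [this, Nat.choose_succ_succ]
      push_cast; ring
    rw [Finset.sum_congr rfl h1, Finset.sum_add_distrib, add_assoc]
    congr 1
    -- remaining: ∑ C(n,m+1) X_{m+1} Y_{n-m} + C(n+1,0) X_0 Y_{n+1} = ∑ C(n,m) X_m Y_{(n-m)+1}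
    have h2 : ∑ m ∈ Finset.range (n+2), (n.choose m : ℝ) * degFallFact x l m
          * degFallFact y l (n+1-m)
        = ∑ m ∈ Finset.range (n+1), (n.choose (m+1) : ℝ) * degFallFact x l (m+1)
          * degFallFact y l (n-m)
          + ((n+1).choose 0 : ℝ) * degFallFact x l 0 * degFallFact y l (n+1) := by
      rw [Finset.sum_range_succ' (fun m => ((n.choose m : ℝ)) * degFallFact x l m
          * degFallFact y l (n+1-m))]
      congr 1
      · apply Finset.sum_congr rfl
        intro m _
        have : n+1-(m+1) = n-m := by omega
        rw [this]
      · simp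
    simp only [Nat.sub_zero]
    rw [← h2, Finset.sum_range_succ (fun m => ((n.choose m : ℝ)) * degFallFact x l m
        * degFallFact y l (n+1-m)) (n+1)]
    have hlast : (n.choose (n+1) : ℝ) * degFallFact x l (n+1) * degFallFact y l (n+1-(n+1)) = 0 := by
      simp [Nat.choose_eq_zero_of_lt]
    rw [hlast, add_zero]
    apply Finset.sum_congr rfl
    intro m hm
    have hmn : m ≤ n := Nat.lt_succ_iff.mp (Finset.mem_range.mp hm)
    have : (n-m)+1 = n+1-m := by omega
    rw [this]

lemma key_identity (l : ℝ) (r n : ℕ) (S : ℕ → ℕ → ℝ)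
    (hS : ∀ (m : ℕ) (x : ℝ), degFallFact (x + r) l m
      = ∑ k ∈ Finset.range (m+1), S m k * ff x k) :
    ∀ j < n, ((j:ℝ)+1) * S n (j+1)
      = ∑ m ∈ Finset.Ico j n, (n.choose m : ℝ) * degFallFact 1 l (n-m) * S m j := by
  have lhs1 : ∀ x : ℝ, ∑ j ∈ Finset.range n, (((j:ℝ)+1) * S n (j+1)) * ff x j
      = degFallFact (x + 1 + r) l n - degFallFact (x + r) l n := by
    intro x
    have e1 : degFallFact (x + 1 + r) l n
        = ∑ k ∈ Finset.range (n+1), S n k * ff (x+1) k := hS n (x+1)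
    have e2 : ∀ k ∈ Finset.range (n+1),
        S n k * ff (x+1) k = S n k * ff x k + S n k * (k * ff x (k-1)) := by
      intro k _; rw [ff_shift]; ring
    rw [e1, Finset.sum_congr rfl e2, Finset.sum_add_distrib, ← hS n x]
    have e3 : ∑ k ∈ Finset.range (n+1), S n k * (k * ff x (k-1))
        = ∑ j ∈ Finset.range n, (((j:ℝ)+1) * S n (j+1)) * ff x j := by
      rw [Finset.sum_range_succ' (fun k => S n k * ((k:ℝ) * ff x (k-1))) n]
      simp only [Nat.cast_zero, zero_mul, mul_zero, add_zero]
      apply Finset.sum_congr rfl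
      intro j _
      simp only [Nat.add_sub_cancel]
      push_cast; ring
    rw [e3]; ring
  have rhs1 : ∀ x : ℝ, ∑ j ∈ Finset.range n,
      (∑ m ∈ Finset.Ico j n, (n.choose m : ℝ) * degFallFact 1 l (n-m) * S m j) * ff x j
      = degFallFact (x + 1 + r) l n - degFallFact (x + r) l n := by
    intro x
    have e1 : degFallFact (x + 1 + r) l n = ∑ m ∈ Finset.range (n+1),
        (n.choose m : ℝ) * degFallFact (x + r) l m * degFallFact 1 l (n-m) := by
      rw [show x + 1 + (r:ℝ) = (x + r) + 1 by ring]
      exact vdm l (x + r) 1 n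
    rw [e1, Finset.sum_range_succ]
    simp only [Nat.sub_self, Nat.choose_self, Nat.cast_one, one_mul]
    rw [show degFallFact 1 l 0 = 1 from rfl, mul_one, add_sub_cancel_right]
    have e2 : ∀ m ∈ Finset.range n,
        (n.choose m : ℝ) * degFallFact (x + r) l m * degFallFact 1 l (n-m)
        = ∑ k ∈ Finset.range (m+1),
            ((n.choose m : ℝ) * degFallFact 1 l (n-m) * S m k) * ff x k := by
      intro m _
      rw [hS m x, Finset.mul_sum, Finset.sum_mul]
      apply Finset.sum_congr rfl; intro k _; ring
    rw [Finset.sum_congr rfl e2, sum_swap_tri n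
      (fun m k => ((n.choose m : ℝ) * degFallFact 1 l (n-m) * S m k) * ff x k)]
    apply Finset.sum_congr rfl
    intro j _
    rw [Finset.sum_mul]
  have H : ∀ x : ℝ, ∑ j ∈ Finset.range n,
      ((((j:ℝ)+1) * S n (j+1)
        - ∑ m ∈ Finset.Ico j n, (n.choose m : ℝ) * degFallFact 1 l (n-m) * S m j)) * ff x j = 0 := by
    intro x
    have : ∀ j ∈ Finset.range n,
        ((((j:ℝ)+1) * S n (j+1)
          - ∑ m ∈ Finset.Ico j n, (n.choose m : ℝ) * degFallFact 1 l (n-m) * S m j)) * ff x j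
        = (((j:ℝ)+1) * S n (j+1)) * ff x j
          - (∑ m ∈ Finset.Ico j n, (n.choose m : ℝ) * degFallFact 1 l (n-m) * S m j) * ff x j := by
      intro j _; ring
    rw [Finset.sum_congr rfl this, Finset.sum_sub_distrib, lhs1 x, rhs1 x, sub_self]
  intro j hj
  have hc := coeff_unique n _ H j hj
  linarith [hc]

/-- for `n ≥ 1`,
`d/dx φ_{n,λ}^{(r)}(x) = ∑_{k=0}^{n-1} C(n,k) (1)_{n-k,λ} φ_{k,λ}^{(r)}(x)`,
where `φ_{m,λ}^{(r)}(x) = ∑_{k=0}^m S(m,k) x^k` and `S` are the degenerate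
r-Stirling numbers of the second kind. -/
theorem degBell_deriv (l : ℝ) (r n : ℕ) (hn : 1 ≤ n) (S : ℕ → ℕ → ℝ)
    (hS : ∀ (m : ℕ) (x : ℝ), degFallFact (x + r) l m =
      ∑ k ∈ Finset.range (m + 1), S m k * ∏ i ∈ Finset.range k, (x - i))
    (x : ℝ) :
    HasDerivAt (fun y : ℝ => ∑ k ∈ Finset.range (n + 1), S n k * y ^ k)
      (∑ k ∈ Finset.range n, (n.choose k : ℝ) * degFallFact 1 l (n - k) *
        ∑ j ∈ Finset.range (k + 1), S k j * x ^ j) x := by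
  have hS' : ∀ (m : ℕ) (x : ℝ), degFallFact (x + r) l m
      = ∑ k ∈ Finset.range (m+1), S m k * ff x k := hS
  have key := key_identity l r n S hS'
  have hder : HasDerivAt (fun y : ℝ => ∑ k ∈ Finset.range (n+1), S n k * y ^ k)
      (∑ k ∈ Finset.range (n+1), S n k * ((k:ℝ) * x ^ (k-1))) x :=
    HasDerivAt.fun_sum (fun k _ => (hasDerivAt_pow k x).const_mul (S n k))
  have heq : ∑ k ∈ Finset.range (n+1), S n k * ((k:ℝ) * x ^ (k-1))
      = ∑ k ∈ Finset.range n, (n.choose k : ℝ) * degFallFact 1 l (n-k) *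
        ∑ j ∈ Finset.range (k+1), S k j * x ^ j := by
    rw [Finset.sum_range_succ' (fun k => S n k * ((k:ℝ) * x ^ (k-1))) n]
    simp only [Nat.cast_zero, zero_mul, mul_zero, add_zero]
    have h1 : ∀ j ∈ Finset.range n, S n (j+1) * (((j+1:ℕ):ℝ) * x ^ ((j+1)-1))
        = ∑ m ∈ Finset.Ico j n,
            ((n.choose m : ℝ) * degFallFact 1 l (n-m) * S m j) * x ^ j := by
      intro j hj
      have : S n (j+1) * (((j+1:ℕ):ℝ) * x ^ ((j+1)-1))
          = (((j:ℝ)+1) * S n (j+1)) * x ^ j := by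
        simp only [Nat.add_sub_cancel]; push_cast; ring
      rw [this, key j (Finset.mem_range.mp hj), Finset.sum_mul]
    rw [Finset.sum_congr rfl h1, ← sum_swap_tri n
      (fun m j => ((n.choose m : ℝ) * degFallFact 1 l (n-m) * S m j) * x ^ j)]
    apply Finset.sum_congr rfl
    intro m _
    rw [Finset.mul_sum]
    apply Finset.sum_congr rfl; intro j _; ring
  rw [← heq]
  exact hder
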